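/- Tightness of the Binary Offset bound: there exists a 2-action partial label distribution D (e.g., reward vector always (0,1) for every x) such that for every v ∈ [0,1] there is a (randomized) classifier c with policy regret exactly v and binary error-rate regret on the induced distribution Q_D exactly v. -/
import Mathlib


open MeasureTheory

/-- tightness of the Binary Offset bound: there exists a 2-action partial
label distribution `D` over `X × [0,1]²` (with `X = PUnit`; e.g. reward vector always
`(0,1)`) such that for every `v ∈ [0,1]` there is a randomized classifier — given by
`g : X → ℝ` with `g x ∈ [0,1]` the probability of predicting label `1` — whose policy
regret is exactly `v` and whose binary error-rate regret on the induced distribution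
`Q_D` is exactly `v`.  Values and error rates extend linearly to randomized
classifiers. -/
theorem binary_offset_regret_tight :
    ∃ D : Measure (PUnit × ℝ × ℝ), IsProbabilityMeasure D ∧
      (∀ᵐ q ∂D, q.2.1 ∈ Set.Icc (0:ℝ) 1 ∧ q.2.2 ∈ Set.Icc (0:ℝ) 1) ∧
      (let η : (PUnit → ℝ) → ℝ := fun g => ∫ q, (g q.1 * q.2.1 + (1 - g q.1) * q.2.2) ∂D
       let w1 : ℝ × ℝ → ℝ := fun r =>
        (if 1/2 < r.1 then |r.1 - 1/2| else 0) + (if r.2 < 1/2 then |r.2 - 1/2| else 0)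
       let wm1 : ℝ × ℝ → ℝ := fun r =>
        (if 1/2 < r.2 then |r.2 - 1/2| else 0) + (if r.1 < 1/2 then |r.1 - 1/2| else 0)
       let W : ℝ := ∫ q, (w1 q.2 + wm1 q.2) ∂D
       let err : (PUnit → ℝ) → ℝ := fun g =>
        (∫ q, (g q.1 * wm1 q.2 + (1 - g q.1) * w1 q.2) ∂D) / W
       ∀ v ∈ Set.Icc (0:ℝ) 1, ∃ g : PUnit → ℝ,
        (∀ x, g x ∈ Set.Icc (0:ℝ) 1) ∧
        (⨆ g' : {f : PUnit → ℝ // ∀ x, f x ∈ Set.Icc (0:ℝ) 1}, η g'.1) - η g = v ∧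
        err g - (⨅ g' : {f : PUnit → ℝ // ∀ x, f x ∈ Set.Icc (0:ℝ) 1}, err g'.1) = v) := by
  refine ⟨Measure.dirac (PUnit.unit, ((0:ℝ),(1:ℝ))), Measure.dirac.isProbabilityMeasure, ?_, ?_⟩
  · rw [MeasureTheory.ae_dirac_eq]
    simp
  intro η w1 wm1 W err v hv
  haveI : Nonempty {f : PUnit → ℝ // ∀ x, f x ∈ Set.Icc (0:ℝ) 1} :=
    ⟨⟨fun _ => 0, fun _ => by norm_num⟩⟩
  have habs : |(1:ℝ)/2| = 1/2 := abs_of_pos (by norm_num)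
  have hη : ∀ g : PUnit → ℝ, η g = 1 - g PUnit.unit := by
    intro g
    simp [η, integral_dirac]
  have hW : W = 1 := by
    simp only [W, w1, wm1, integral_dirac]
    norm_num [habs]
  have herr : ∀ g : PUnit → ℝ, err g = g PUnit.unit := by
    intro g
    simp only [err, w1, wm1, integral_dirac, hW]
    norm_num [habs]
  have hsup : (⨆ g' : {f : PUnit → ℝ // ∀ x, f x ∈ Set.Icc (0:ℝ) 1}, η g'.1) = 1 := by
    apply le_antisymm
    · apply ciSup_le
      intro g'
      have := (g'.2 PUnit.unit).1
      simp only [hη]; linarith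
    · have hb : BddAbove (Set.range fun g' : {f : PUnit → ℝ // ∀ x, f x ∈ Set.Icc (0:ℝ) 1} => η g'.1) := by
        refine ⟨1, ?_⟩
        rintro y ⟨g', rfl⟩
        have := (g'.2 PUnit.unit).1
        simp only [hη]; linarith
      have h0 : η (fun _ => (0:ℝ)) = 1 := by simpa using hη (fun _ => 0)
      calc (1:ℝ) = η (fun _ => (0:ℝ)) := h0.symm
        _ ≤ _ := le_ciSup hb ⟨fun _ => (0:ℝ), fun _ => by norm_num⟩
  have hinf : (⨅ g' : {f : PUnit → ℝ // ∀ x, f x ∈ Set.Icc (0:ℝ) 1}, err g'.1) = 0 := by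
    apply le_antisymm
    · have hb : BddBelow (Set.range fun g' : {f : PUnit → ℝ // ∀ x, f x ∈ Set.Icc (0:ℝ) 1} => err g'.1) := by
        refine ⟨0, ?_⟩
        rintro y ⟨g', rfl⟩
        have := (g'.2 PUnit.unit).1
        simp only [herr]; linarith
      have h0 : err (fun _ => (0:ℝ)) = 0 := by simpa using herr (fun _ => 0)
      calc (⨅ g' : {f : PUnit → ℝ // ∀ x, f x ∈ Set.Icc (0:ℝ) 1}, err g'.1)
          ≤ err (fun _ => (0:ℝ)) := ciInf_le hb ⟨fun _ => (0:ℝ), fun _ => by norm_num⟩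
        _ = 0 := h0
    · apply le_ciInf
      intro g'
      have := (g'.2 PUnit.unit).1
      simp only [herr]; linarith
  refine ⟨fun _ => v, fun _ => hv, ?_, ?_⟩
  · have h : η (fun _ : PUnit => v) = 1 - v := by simpa using hη (fun _ => v)
    rw [hsup]; linarith [h]
  · have h : err (fun _ : PUnit => v) = v := by simpa using herr (fun _ => v)
    rw [hinf]; linarith [h]
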